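/- Let (P, C, ψ) be an entwining structure such that P is an entwined module via its multiplication and a coaction ρ with ρ(1) = 1 ⊗ e for group-like e ∈ C. Set B = P^{co C}_e. Let π: C → D be a coalgebra map, ē = π(e), and A = {a ∈ P | (id ⊗ π)∘ρ(a) = a ⊗ ē}. If P is a C-equivariantly projective left B-module (i.e. the multiplication B ⊗ P → P has a left B-linear, right C-colinear splitting σ), then A is a projective left B-module. -/

import Mathlib

open TensorProduct

variable (k C D P : Type) [Field k] [AddCommGroup C] [Module k C] [Coalgebra k C]
  [AddCommGroup D] [Module k D] [Coalgebra k D]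
  [Ring P] [Algebra k P]

/-- The `ē`-coinvariants `A ⊆ P` of the pushed-forward `D`-coaction `(id ⊗ π)∘ρ`. -/
noncomputable def Asub (ρ : P →ₗ[k] P ⊗[k] C) (π : C →ₗ[k] D) (eb : D) :
    Submodule k P :=
  LinearMap.ker ((LinearMap.lTensor P π ∘ₗ ρ) - (TensorProduct.mk k P D).flip eb)

/-- The `e`-coinvariants `B = P^{co C}_e`. -/
def Bset (ρ : P →ₗ[k] P ⊗[k] C) (e : C) : Set P := {b : P | ρ b = b ⊗ₜ[k] e}


set_option linter.unusedSectionVars false in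
lemma aux_assoc_nat (π : C →ₗ[k] D) (y : (P ⊗[k] P) ⊗[k] C) :
    LinearMap.lTensor P (LinearMap.lTensor P π) (TensorProduct.assoc k P P C y)
      = TensorProduct.assoc k P P D (LinearMap.lTensor (P ⊗[k] P) π y) := by
  have : (LinearMap.lTensor P (LinearMap.lTensor P π)) ∘ₗ
      (TensorProduct.assoc k P P C).toLinearMap
      = (TensorProduct.assoc k P P D).toLinearMap ∘ₗ LinearMap.lTensor (P ⊗[k] P) π := by
    apply TensorProduct.ext_threefold
    intro p q c
    simp
  exact LinearMap.congr_fun this y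

set_option linter.unusedSectionVars false in
lemma aux_assoc_tmul (d : D) (x : P ⊗[k] P) :
    TensorProduct.assoc k P P D (x ⊗ₜ[k] d)
      = LinearMap.lTensor P ((TensorProduct.mk k P D).flip d) x := by
  induction x using TensorProduct.induction_on with
  | zero => simp
  | tmul p q => simp
  | add x y hx hy => rw [TensorProduct.add_tmul, map_add, map_add, hx, hy]

/-- let `(P, C, ψ)` be an entwining structure such that `P` is an entwined
module via its multiplication and a coaction `ρ` with `ρ(1) = 1 ⊗ e`, `e` group-like,
`B = P^{co C}_e`, `π : C → D` a coalgebra map, `ē = π(e)` and `A` the `ē`-coinvariants.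
If `P` is `C`-equivariantly projective as a left `B`-module, then `A` is a projective
left `B`-module (phrased: the left multiplication `B ⊗ A → A` admits a left `B`-linear
splitting, exhibiting `A` as a direct summand of a free left `B`-module). -/
theorem stmt6
    (ψ : C ⊗[k] P →ₗ[k] P ⊗[k] C)
    -- entwining axioms
    (hmul : ∀ w : C ⊗[k] (P ⊗[k] P),
      ψ (LinearMap.lTensor C (LinearMap.mul' k P) w) =
        LinearMap.rTensor C (LinearMap.mul' k P)
          ((TensorProduct.assoc k P P C).symm
            (LinearMap.lTensor P ψ
              (TensorProduct.assoc k P C P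
                (LinearMap.rTensor P ψ ((TensorProduct.assoc k C P P).symm w))))))
    (hunit : ∀ c : C, ψ (c ⊗ₜ[k] (1 : P)) = (1 : P) ⊗ₜ[k] c)
    (hcomul : ∀ w : C ⊗[k] P,
      LinearMap.lTensor P (Coalgebra.comul (R := k) (A := C)) (ψ w) =
        TensorProduct.assoc k P C C
          (LinearMap.rTensor C ψ
            ((TensorProduct.assoc k C P C).symm
              (LinearMap.lTensor C ψ
                (TensorProduct.assoc k C C P
                  (LinearMap.rTensor P (Coalgebra.comul (R := k) (A := C)) w))))))
    (hcounit : ∀ w : C ⊗[k] P,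
      TensorProduct.rid k P
        (LinearMap.lTensor P (Coalgebra.counit (R := k) (A := C)) (ψ w)) =
        TensorProduct.lid k P
          (LinearMap.rTensor P (Coalgebra.counit (R := k) (A := C)) w))
    (ρ : P →ₗ[k] P ⊗[k] C)
    -- `P` is an entwined module via its multiplication and `ρ`
    (hent : ∀ q p : P,
      ρ (q * p) =
        LinearMap.rTensor C (LinearMap.mul' k P)
          ((TensorProduct.assoc k P P C).symm
            (LinearMap.lTensor P ψ
              (TensorProduct.assoc k P C P ((ρ q) ⊗ₜ[k] p)))))
    (e : C) (he_counit : Coalgebra.counit (R := k) e = 1)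
    (he_comul : Coalgebra.comul (R := k) e = e ⊗ₜ[k] e)
    (h1 : ρ 1 = 1 ⊗ₜ[k] e)
    (π : C →ₗ[k] D)
    (hπΔ : ∀ c : C,
      Coalgebra.comul (R := k) (π c) = TensorProduct.map π π (Coalgebra.comul c))
    (hπε : ∀ c : C,
      Coalgebra.counit (R := k) (π c) = Coalgebra.counit (R := k) c)
    -- `P` is a `C`-equivariantly projective left `B`-module: there is a left `B`-linear,
    -- right `C`-colinear splitting `σ : P → B ⊗ P` of the multiplication map
    (hproj : ∃ σ : P →ₗ[k] P ⊗[k] P,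
      (∀ p : P, LinearMap.mul' k P (σ p) = p) ∧
      (∀ p : P, σ p ∈
        Submodule.span k {w : P ⊗[k] P | ∃ b ∈ Bset k C P ρ e, ∃ q : P, w = b ⊗ₜ[k] q}) ∧
      (∀ b ∈ Bset k C P ρ e, ∀ p : P,
        σ (b * p) = LinearMap.rTensor P (LinearMap.mulLeft k b) (σ p)) ∧
      (∀ p : P,
        LinearMap.rTensor C σ (ρ p) =
          (TensorProduct.assoc k P P C).symm (LinearMap.lTensor P ρ (σ p)))) :
    -- conclusion: `A` is a projective left `B`-module
    ∃ τ : P →ₗ[k] P ⊗[k] P,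
      (∀ a ∈ Asub k C D P ρ π (π e), LinearMap.mul' k P (τ a) = a) ∧
      (∀ a ∈ Asub k C D P ρ π (π e), τ a ∈
        Submodule.span k {w : P ⊗[k] P | ∃ b ∈ Bset k C P ρ e,
          ∃ a' ∈ Asub k C D P ρ π (π e), w = b ⊗ₜ[k] a'}) ∧
      (∀ b ∈ Bset k C P ρ e, ∀ a ∈ Asub k C D P ρ π (π e),
        τ (b * a) = LinearMap.rTensor P (LinearMap.mulLeft k b) (τ a)) := by
  classical
  obtain ⟨σ, hσmul, hσspan, hσB, hσcol⟩ := hproj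
  set φ : P →ₗ[k] P ⊗[k] D :=
    (LinearMap.lTensor P π ∘ₗ ρ) - (TensorProduct.mk k P D).flip (π e) with hφ
  have hA : Asub k C D P ρ π (π e) = LinearMap.ker φ := rfl
  set U : Submodule k P := Submodule.span k (Bset k C P ρ e) with hU
  refine ⟨σ, fun a _ => hσmul a, ?_, fun b hb a _ => hσB b hb a⟩
  intro a ha
  -- key: lTensor P φ (σ a) = 0
  have hmem : LinearMap.lTensor P π (ρ a) = a ⊗ₜ[k] π e := by
    rw [hA, LinearMap.mem_ker, hφ, LinearMap.sub_apply, sub_eq_zero] at ha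
    exact ha
  have key : LinearMap.lTensor P φ (σ a) = 0 := by
    have swap : ∀ z : P ⊗[k] C,
        LinearMap.lTensor (P ⊗[k] P) π (LinearMap.rTensor C σ z)
          = LinearMap.rTensor D σ (LinearMap.lTensor P π z) := by
      intro z
      rw [← LinearMap.comp_apply, ← LinearMap.comp_apply,
        LinearMap.lTensor_comp_rTensor, LinearMap.rTensor_comp_lTensor]
    have h1 : LinearMap.lTensor P ρ (σ a)
        = TensorProduct.assoc k P P C (LinearMap.rTensor C σ (ρ a)) := by
      rw [hσcol a, LinearEquiv.apply_symm_apply]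
    rw [hφ, LinearMap.lTensor_sub, LinearMap.sub_apply, sub_eq_zero,
      LinearMap.lTensor_comp, LinearMap.comp_apply, h1, aux_assoc_nat, swap, hmem,
      LinearMap.rTensor_tmul, aux_assoc_tmul]
  -- σ a lies in U ⊗ P
  have hrange : σ a ∈ LinearMap.range (LinearMap.rTensor P U.subtype) := by
    refine Submodule.span_le.mpr ?_ (hσspan a)
    rintro w ⟨b, hb, q, rfl⟩
    exact ⟨(⟨b, Submodule.subset_span hb⟩ : U) ⊗ₜ[k] q, rfl⟩
  obtain ⟨w', hw'⟩ := hrange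
  have hinj : Function.Injective (LinearMap.rTensor (P ⊗[k] D) U.subtype) :=
    Module.Flat.rTensor_preserves_injective_linearMap _ U.injective_subtype
  have hker : LinearMap.lTensor U φ w' = 0 := by
    apply hinj
    rw [map_zero]
    have hcomm : LinearMap.rTensor (P ⊗[k] D) U.subtype (LinearMap.lTensor U φ w')
        = LinearMap.lTensor P φ (LinearMap.rTensor P U.subtype w') := by
      rw [← LinearMap.comp_apply, ← LinearMap.comp_apply,
        LinearMap.rTensor_comp_lTensor, LinearMap.lTensor_comp_rTensor]
    rw [hcomm, hw', key]
  have hexact := Module.Flat.lTensor_exact (M := U) (R := k)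
    (LinearMap.exact_subtype_ker_map φ)
  obtain ⟨w'', hw''⟩ := (hexact w').mp hker
  have hσa : σ a = TensorProduct.map U.subtype (LinearMap.ker φ).subtype w'' := by
    rw [← hw', ← hw'', ← LinearMap.comp_apply, LinearMap.rTensor_comp_lTensor]
  rw [hσa]
  have hmem2 : TensorProduct.map U.subtype (LinearMap.ker φ).subtype w''
      ∈ LinearMap.range (TensorProduct.map U.subtype (LinearMap.ker φ).subtype) :=
    ⟨w'', rfl⟩
  rw [TensorProduct.range_map_eq_span_tmul] at hmem2
  refine Submodule.span_le.mpr ?_ hmem2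
  rintro w ⟨u, a', rfl⟩
  have ha' : (a' : P) ∈ Asub k C D P ρ π (π e) := by rw [hA]; exact a'.2
  have main : ∀ x : P, x ∈ Submodule.span k (Bset k C P ρ e) →
      x ⊗ₜ[k] (a' : P) ∈ Submodule.span k {w : P ⊗[k] P | ∃ b ∈ Bset k C P ρ e,
        ∃ a'' ∈ Asub k C D P ρ π (π e), w = b ⊗ₜ[k] a''} := by
    intro x hx
    induction hx using Submodule.span_induction with
    | mem b hb =>
      exact Submodule.subset_span ⟨b, hb, (a' : P), ha', rfl⟩
    | zero => simp
    | add x y _ _ hx hy =>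
      rw [TensorProduct.add_tmul]; exact Submodule.add_mem _ hx hy
    | smul c x _ hx =>
      rw [← TensorProduct.smul_tmul']; exact Submodule.smul_mem _ c hx
  simpa using main (u : P) u.2
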